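/- arXiv:1702.03379 — 4 statements merged into one kernel-verified Lean document; each statement's English description precedes it below -/
import Mathlib

section
/- For every real x with 1/2 ≤ x ≤ 1, it holds that 1/2 ≤ x·(−0.8099868542·x + 1.787727479)² < 3/2. -/
/-- The linear initial approximation `b₀' = α·x + β` of `1/√x` used in the square-root
protocol satisfies the Goldschmidt convergence condition `1/2 ≤ x·(b₀')² < 3/2` on the
normalized range `1/2 ≤ x ≤ 1`. -/
theorem goldschmidt_initial_approx_in_range (x : ℝ) (h1 : 1 / 2 ≤ x) (h2 : x ≤ 1) :
    1 / 2 ≤ x * (-0.8099868542 * x + 1.787727479) ^ 2 ∧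
      x * (-0.8099868542 * x + 1.787727479) ^ 2 < 3 / 2 := by
  constructor
  · nlinarith [sq_nonneg (x - 1/2), sq_nonneg (1 - x), mul_nonneg (sub_nonneg.2 h1) (sub_nonneg.2 h2), sq_nonneg x, mul_nonneg (mul_nonneg (sub_nonneg.2 h1) (sub_nonneg.2 h2)) (sub_nonneg.2 h1)]
  · nlinarith [mul_nonneg (sub_nonneg.2 h1) (sub_nonneg.2 h2), sq_nonneg (x - 1/2), sq_nonneg (1 - x), mul_nonneg (mul_nonneg (sub_nonneg.2 h1) (sub_nonneg.2 h2)) (sub_nonneg.2 h2)]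
end

section
/- For every real x with 1/2 ≤ x ≤ 1, it holds that | √x·(−0.8099868542·x + 1.787727479) − 1 | ≤ 2^(−5.4). -/
/-- The linear initial approximation `α·x + β` of `1/√x` used in the square-root protocol
has relative error at most `2^(−5.4)` on the normalized range `1/2 ≤ x ≤ 1`. -/
theorem goldschmidt_initial_approx_precision (x : ℝ) (h1 : 1 / 2 ≤ x) (h2 : x ≤ 1) :
    |Real.sqrt x * (-0.8099868542 * x + 1.787727479) - 1| ≤ (2 : ℝ) ^ (-(5.4 : ℝ)) := by
  have hx0 : (0:ℝ) ≤ x := by linarith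
  set t := Real.sqrt x with ht
  have ht0 : 0 ≤ t := Real.sqrt_nonneg x
  have ht2 : t ^ 2 = x := Real.sq_sqrt hx0
  have ht1 : t ≤ 1 := by rw [ht, show (1:ℝ) = Real.sqrt 1 by simp]; exact Real.sqrt_le_sqrt h2
  have htl : (0.7071067 : ℝ) ≤ t := by nlinarith [sq_nonneg (t - 0.7071067)]
  have hc : (0.023 : ℝ) ≤ (2 : ℝ) ^ (-(5.4 : ℝ)) := by
    have h5 : ((2 : ℝ) ^ (-(5.4 : ℝ))) ^ (5:ℕ) = (2 : ℝ) ^ (-(27 : ℝ)) := by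
      rw [← Real.rpow_natCast ((2:ℝ) ^ (-(5.4:ℝ))) 5, ← Real.rpow_mul (by norm_num)]
      norm_num
    have h27 : (2 : ℝ) ^ (-(27 : ℝ)) = ((2:ℝ)^(27:ℕ))⁻¹ := by
      rw [show ((27:ℝ)) = ((27:ℕ):ℝ) by norm_num, Real.rpow_neg (by norm_num), Real.rpow_natCast]
    have hpos : (0:ℝ) < (2 : ℝ) ^ (-(5.4 : ℝ)) := Real.rpow_pos_of_pos (by norm_num) _
    nlinarith [pow_pos hpos 1, pow_pos hpos 2, pow_pos hpos 3, pow_pos hpos 4,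
      h5, sq_nonneg ((2:ℝ)^(-(5.4:ℝ)) - 0.023), sq_nonneg (((2:ℝ)^(-(5.4:ℝ)))^2 - 0.023^2)]
  have key : |t * (-0.8099868542 * x + 1.787727479) - 1| ≤ 0.023 := by
    rw [← ht2, abs_le]
    constructor
    · nlinarith [mul_nonneg (mul_nonneg (by linarith : (0:ℝ) ≤ t - 0.7071067) (by linarith : (0:ℝ) ≤ 1 - t)) (by linarith : (0:ℝ) ≤ t + 1.7071067)]
    · nlinarith [mul_nonneg (sq_nonneg (t - 0.8577314)) (by linarith : (0:ℝ) ≤ t + 1.7154628)]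
  linarith [key]
end

section
/- Let u ∈ ℝ and set u' = u·(3/2 − u)². If d = 1 − 2u and d' = 1 − 2u', then d' = d²·(3 + d)/4. In particular, if |d| ≤ 1/2 then |d'| ≤ (7/8)·d². -/
/-- Quadratic contraction of Goldschmidt's square-root iteration: if `u' = u·(3/2 − u)²`,
`d = 1 − 2u` and `d' = 1 − 2u'`, then `d' = d²·(3 + d)/4`; in particular `|d| ≤ 1/2`
implies `|d'| ≤ (7/8)·d²`. -/
theorem goldschmidt_contraction (u u' d d' : ℝ)
    (hu' : u' = u * (3 / 2 - u) ^ 2) (hd : d = 1 - 2 * u) (hd' : d' = 1 - 2 * u') :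
    d' = d ^ 2 * (3 + d) / 4 ∧ (|d| ≤ 1 / 2 → |d'| ≤ 7 / 8 * d ^ 2) := by
  have h1 : d' = d ^ 2 * (3 + d) / 4 := by subst hu' hd hd'; ring
  refine ⟨h1, fun hle => ?_⟩
  have hd2 : |3 + d| ≤ 7 / 2 := by
    rw [abs_le] at hle ⊢; constructor <;> linarith [hle.1, hle.2]
  calc |d'| = d ^ 2 * |3 + d| / 4 := by
        rw [h1, abs_div, abs_mul, abs_pow, sq_abs]; norm_num
    _ ≤ d ^ 2 * (7 / 2) / 4 := by
        gcongr
    _ = 7 / 8 * d ^ 2 := by ring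
end

section
/- Let a > 0 and b₀ > 0 be reals with 1/2 ≤ a·b₀² < 3/2. Define sequences (g_n), (h_n) by g₀ = a·b₀, h₀ = b₀/2, and g_{n+1} = g_n·(3/2 − g_n·h_n), h_{n+1} = h_n·(3/2 − g_n·h_n). Then g_n = 2a·h_n for all n, the sequence g_n converges to √a, and the sequence h_n converges to 1/(2√a). -/
open Filter

/-- Convergence of Goldschmidt's square-root iteration: with `g₀ = a·b₀`, `h₀ = b₀/2`,
`g_{n+1} = g_n·(3/2 − g_n·h_n)` and `h_{n+1} = h_n·(3/2 − g_n·h_n)`, and an initial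
approximation satisfying `1/2 ≤ a·b₀² < 3/2`, we have `g_n = 2a·h_n` for all `n`,
`g_n → √a`, and `h_n → 1/(2√a)`. -/
theorem goldschmidt_sqrt_convergence (a b₀ : ℝ) (ha : 0 < a) (hb₀ : 0 < b₀)
    (hinit₁ : 1 / 2 ≤ a * b₀ ^ 2) (hinit₂ : a * b₀ ^ 2 < 3 / 2)
    (g h : ℕ → ℝ) (hg0 : g 0 = a * b₀) (hh0 : h 0 = b₀ / 2)
    (hgs : ∀ n, g (n + 1) = g n * (3 / 2 - g n * h n))
    (hhs : ∀ n, h (n + 1) = h n * (3 / 2 - g n * h n)) :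
    (∀ n, g n = 2 * a * h n) ∧
      Tendsto g atTop (nhds (Real.sqrt a)) ∧
      Tendsto h atTop (nhds (1 / (2 * Real.sqrt a))) := by
  have key : ∀ n, g n = 2 * a * h n ∧ 0 < g n ∧
      |1 - 2 * (g n * h n)| ≤ (1/2) * (7/16)^n := by
    intro n
    induction n with
    | zero =>
      refine ⟨by rw [hg0, hh0]; ring, by rw [hg0]; positivity, ?_⟩
      rw [hg0, hh0, pow_zero, abs_le]
      constructor <;> nlinarith
    | succ n ih =>
      obtain ⟨hrel, hpos, herr⟩ := ih
      set e := 1 - 2 * (g n * h n) with he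
      have hpow1 : ((7:ℝ)/16)^n ≤ 1 := pow_le_one₀ (by norm_num) (by norm_num)
      have habs : |e| ≤ 1/2 := by
        calc |e| ≤ (1/2) * (7/16)^n := herr
          _ ≤ (1/2) * 1 := by gcongr
          _ = 1/2 := by ring
      have he1 : -(1/2) ≤ e := (abs_le.mp habs).1
      have he2 : e ≤ 1/2 := (abs_le.mp habs).2
      have hfac : 3/2 - g n * h n = 1 + e/2 := by rw [he]; ring
      refine ⟨by rw [hgs, hhs, hrel]; ring, ?_, ?_⟩
      · rw [hgs, hfac]
        have h1 : (0:ℝ) < 1 + e/2 := by linarith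
        positivity
      · have hgh : g (n+1) * h (n+1) = (g n * h n) * (3/2 - g n * h n)^2 := by
          rw [hgs, hhs]; ring
        have hghe : g n * h n = (1 - e)/2 := by rw [he]; ring
        have hid : 1 - 2 * (g (n+1) * h (n+1)) = e^2 * (3 + e) / 4 := by
          rw [hgh, hfac, hghe]; ring
        have hnn : 0 ≤ e^2 * (3 + e) / 4 := by nlinarith [sq_nonneg e]
        have hp : ((7:ℝ)/16)^(n+1) = (7/16)^n * (7/16) := pow_succ _ _
        rw [hid, abs_of_nonneg hnn, hp]
        nlinarith [abs_nonneg e, sq_abs e, sq_nonneg e, herr, habs,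
          mul_le_mul herr habs (abs_nonneg e) (by positivity : (0:ℝ) ≤ (1/2) * (7/16)^n)]
  have hrel : ∀ n, g n = 2 * a * h n := fun n => (key n).1
  have hpos : ∀ n, 0 < g n := fun n => (key n).2.1
  -- g n * h n → 1/2
  have h0 : Tendsto (fun n : ℕ => (1/2:ℝ) * (7/16)^n) atTop (nhds 0) := by
    simpa using (tendsto_pow_atTop_nhds_zero_of_lt_one (by norm_num) (by norm_num)).const_mul (1/2:ℝ)
  have hgh : Tendsto (fun n => g n * h n) atTop (nhds (1/2)) := by
    have hz : Tendsto (fun n => g n * h n - 1/2) atTop (nhds 0) := by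
      apply squeeze_zero_norm _ h0
      intro n
      have := (key n).2.2
      rw [Real.norm_eq_abs]
      calc |g n * h n - 1/2| = |1 - 2 * (g n * h n)| / 2 := by
            rw [show (1:ℝ) - 2 * (g n * h n) = -(2 * (g n * h n - 1/2)) by ring,
              abs_neg, abs_mul, abs_two]; ring
        _ ≤ |1 - 2 * (g n * h n)| := by
            have := abs_nonneg (1 - 2 * (g n * h n)); linarith
        _ ≤ (1/2) * (7/16)^n := this
    have := hz.add_const (1/2)
    simpa using this
  have hsqrt : ∀ n, g n = Real.sqrt (2 * a * (g n * h n)) := by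
    intro n
    have h1 : 2 * a * (g n * h n) = (g n)^2 := by rw [hrel n]; ring
    rw [h1, Real.sqrt_sq (hpos n).le]
  have hga : Tendsto g atTop (nhds (Real.sqrt a)) := by
    have hca : Tendsto (fun n => 2 * a * (g n * h n)) atTop (nhds a) := by
      have := hgh.const_mul (2 * a)
      simpa [mul_comm, mul_assoc] using this
    have := (Real.continuous_sqrt.tendsto a).comp hca
    exact this.congr (fun n => (hsqrt n).symm)
  refine ⟨hrel, hga, ?_⟩
  have hha : ∀ n, h n = g n / (2 * a) := by
    intro n
    rw [hrel n]; field_simp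
  have hsa : 0 < Real.sqrt a := Real.sqrt_pos.mpr ha
  have heq : Real.sqrt a / (2 * a) = 1 / (2 * Real.sqrt a) := by
    rw [div_eq_div_iff (by positivity) (by positivity)]
    nlinarith [Real.mul_self_sqrt ha.le]
  have := hga.div_const (2 * a)
  rw [heq] at this
  exact this.congr (fun n => (hha n).symm)
end
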